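/- arXiv:2601.05885 — 2 statements merged into one kernel-verified Lean document; each statement's English description precedes it below -/
import Mathlib

section
/- For every t ≥ 1 and every n ≥ 4t, if there exist t edge-disjoint maximal outerplanar graphs on n vertices, then there exist t edge-disjoint maximal outerplanar graphs on n+1 vertices. -/
/-- A graph is outerplanar iff it admits a one-page book embedding. -/
def IsOuterplanar {V : Type*} (G : SimpleGraph V) : Prop :=
  ∃ f : V → ℕ, Function.Injective f ∧
    ∀ a b c d : V, G.Adj a b → G.Adj c d →
      ¬ (f a < f c ∧ f c < f b ∧ f b < f d)

/-- A maximal outerplanar graph: outerplanar, and no edge can be added keeping outerplanarity. -/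
def IsMaximalOuterplanar {V : Type*} (G : SimpleGraph V) : Prop :=
  IsOuterplanar G ∧ ∀ u v : V, u ≠ v → ¬ G.Adj u v →
    ¬ IsOuterplanar (G ⊔ SimpleGraph.fromEdgeSet {s(u, v)})

/-- crossing-free layout predicate -/
def CrossFree {V : Type*} (G : SimpleGraph V) (f : V → ℕ) : Prop :=
  ∀ a b c d : V, G.Adj a b → G.Adj c d → ¬ (f a < f c ∧ f c < f b ∧ f b < f d)

lemma sup_single_adj {V : Type*} (G : SimpleGraph V) (u v a b : V)
    (h : (G ⊔ SimpleGraph.fromEdgeSet {s(u, v)}).Adj a b) :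
    G.Adj a b ∨ (a = u ∧ b = v) ∨ (a = v ∧ b = u) := by
  rw [SimpleGraph.sup_adj, SimpleGraph.fromEdgeSet_adj] at h
  rcases h with h | ⟨h, hne⟩
  · exact Or.inl h
  · simp only [Set.mem_singleton_iff, Sym2.eq_iff] at h
    tauto

lemma crossFree_sup_hollow {V : Type*} {G : SimpleGraph V} {f : V → ℕ} {u v : V}
    (hG : CrossFree G f)
    (h1 : ∀ w, ¬ (f u < f w ∧ f w < f v)) (h2 : ∀ w, ¬ (f v < f w ∧ f w < f u)) :
    CrossFree (G ⊔ SimpleGraph.fromEdgeSet {s(u, v)}) f := by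
  rintro a b c d hab hcd ⟨i1, i2, i3⟩
  rcases sup_single_adj G u v a b hab with hab' | ⟨rfl, rfl⟩ | ⟨rfl, rfl⟩
  · rcases sup_single_adj G u v c d hcd with hcd' | ⟨rfl, rfl⟩ | ⟨rfl, rfl⟩
    · exact hG a b c d hab' hcd' ⟨i1, i2, i3⟩
    · exact h1 b ⟨i2, i3⟩
    · exact h2 b ⟨i2, i3⟩
  · exact h1 c ⟨i1, i2⟩
  · exact h2 c ⟨i1, i2⟩

lemma exists_avoid {n : ℕ} (σ : Fin n → Fin n) (hσ : Function.Injective σ)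
    (S : Finset (Fin n)) (h : 2 * S.card + 1 < n) :
    ∃ k k' : Fin n, (k : ℕ) + 1 = (k' : ℕ) ∧ σ k ∉ S ∧ σ k' ∉ S := by
  have hn : 0 < n := by omega
  classical
  set A : Finset (Fin n) := Finset.univ.filter (fun k => σ k ∈ S) with hA
  have hAcard : A.card ≤ S.card := by
    refine Finset.card_le_card_of_injOn σ ?_ (hσ.injOn)
    intro a ha
    rw [hA, Finset.mem_coe, Finset.mem_filter] at ha
    exact ha.2
  set pre : Fin n → Fin n := fun j => ⟨j.val - 1, by omega⟩ with hpre
  set D : Finset (Fin n) := insert ⟨n - 1, by omega⟩ (A ∪ A.image pre) with hD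
  have hDcard : D.card < n := by
    have h1 : D.card ≤ (A ∪ A.image pre).card + 1 := Finset.card_insert_le _ _
    have h2 := Finset.card_union_le A (A.image pre)
    have h3 := Finset.card_image_le (s := A) (f := pre)
    omega
  obtain ⟨k, hk⟩ : ∃ k : Fin n, k ∉ D := by
    by_contra hcon
    push_neg at hcon
    have hsub : (Finset.univ : Finset (Fin n)) ⊆ D := fun x _ => hcon x
    have := Finset.card_le_card hsub
    rw [Finset.card_univ, Fintype.card_fin] at this
    omega
  have hklt : (k : ℕ) + 1 < n := by
    have hne : k ≠ ⟨n - 1, by omega⟩ := by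
      intro hcon
      exact hk (hcon ▸ Finset.mem_insert_self _ _)
    have h2 := k.2
    rcases Nat.lt_or_ge ((k : ℕ) + 1) n with h' | h'
    · exact h'
    · exact absurd (Fin.ext (show (k : ℕ) = n - 1 by omega)) hne
  refine ⟨k, ⟨(k : ℕ) + 1, hklt⟩, rfl, ?_, ?_⟩
  · intro hmem
    exact hk (Finset.mem_insert_of_mem (Finset.mem_union_left _
      (by simp [hA, hmem])))
  · intro hmem
    apply hk
    apply Finset.mem_insert_of_mem
    apply Finset.mem_union_right
    refine Finset.mem_image.2 ⟨⟨(k : ℕ) + 1, hklt⟩, by simp [hA, hmem], ?_⟩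
    simp only [hpre]
    exact Fin.ext (by simp)

def GoodPair {n : ℕ} (G : SimpleGraph (Fin n)) (u v : Fin n) : Prop :=
  G.Adj u v ∧ ∃ f : Fin n → ℕ, Function.Injective f ∧ CrossFree G f ∧ f u < f v ∧
    ∀ w, ¬ (f u < f w ∧ f w < f v)

lemma exists_goodPair {n : ℕ} {G : SimpleGraph (Fin n)} (hG : IsMaximalOuterplanar G)
    (S : Finset (Fin n)) (h : 2 * S.card + 1 < n) :
    ∃ u v, GoodPair G u v ∧ u ∉ S ∧ v ∉ S := by
  obtain ⟨f, hinj, hcf⟩ := hG.1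
  set σ := Tuple.sort f with hσ
  have hmono : Monotone (f ∘ σ) := Tuple.monotone_sort f
  have hsm : StrictMono (f ∘ σ) :=
    hmono.strictMono_of_injective (hinj.comp σ.injective)
  obtain ⟨k, k', hkk', hk, hk'⟩ := exists_avoid σ σ.injective S h
  have hlt : k < k' := by rw [Fin.lt_def]; omega
  have hfkk : f (σ k) < f (σ k') := hsm hlt
  have hollow1 : ∀ w, ¬ (f (σ k) < f w ∧ f w < f (σ k')) := by
    rintro w ⟨ha, hb⟩
    obtain ⟨m, rfl⟩ := σ.surjective w
    have h1 : k < m := hsm.lt_iff_lt.mp ha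
    have h2 : m < k' := hsm.lt_iff_lt.mp hb
    rw [Fin.lt_def] at h1 h2
    omega
  have hollow2 : ∀ w, ¬ (f (σ k') < f w ∧ f w < f (σ k)) := by
    rintro w ⟨ha, hb⟩
    omega
  have hne : σ k ≠ σ k' := fun hcon => absurd (σ.injective hcon) hlt.ne
  have hadj : G.Adj (σ k) (σ k') := by
    by_contra hnadj
    exact hG.2 (σ k) (σ k') hne hnadj
      ⟨f, hinj, crossFree_sup_hollow hcf hollow1 hollow2⟩
  exact ⟨σ k, σ k', ⟨hadj, f, hinj, hcf, hfkk, hollow1⟩, hk, hk'⟩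

lemma lemR {n : ℕ} {G : SimpleGraph (Fin n)} {K : SimpleGraph (Fin (n + 1))}
    (hsub : ∀ p q : Fin n, G.Adj p q → K.Adj p.castSucc q.castSucc)
    {g : Fin (n + 1) → ℕ} (hinj : Function.Injective g) (hc : CrossFree K g)
    {w w' : Fin n} (hw : K.Adj (Fin.last n) w.castSucc) (hw' : K.Adj (Fin.last n) w'.castSucc) :
    IsOuterplanar (G ⊔ SimpleGraph.fromEdgeSet {s(w, w')}) := by
  have hXne : ∀ p : Fin n, g (Fin.last n) ≠ g p.castSucc := by
    intro p h
    exact absurd (hinj h) (Fin.castSucc_lt_last p).ne'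
  refine ⟨g ∘ Fin.castSucc, hinj.comp (Fin.castSucc_injective n), ?_⟩
  rintro a b c d hab hcd ⟨i1, i2, i3⟩
  simp only [Function.comp_apply] at i1 i2 i3
  have key_new_old : ∀ a b c d : Fin n, K.Adj (Fin.last n) a.castSucc →
      K.Adj (Fin.last n) b.castSucc → K.Adj c.castSucc d.castSucc →
      g a.castSucc < g c.castSucc → g c.castSucc < g b.castSucc →
      g b.castSucc < g d.castSucc → False := by
    intro a b c d ha hb hcd' j1 j2 j3
    set X := Fin.last n
    rcases lt_trichotomy (g X) (g c.castSucc) with h | h | h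
    · exact hc X b.castSucc c.castSucc d.castSucc hb hcd' ⟨h, j2, j3⟩
    · exact hXne c h
    · rcases lt_trichotomy (g X) (g d.castSucc) with h' | h' | h'
      · exact hc a.castSucc X c.castSucc d.castSucc ha.symm hcd' ⟨j1, h, h'⟩
      · exact hXne d h'
      · exact hc c.castSucc d.castSucc b.castSucc X hcd' hb.symm ⟨j2, j3, h'⟩
  have key_old_new : ∀ a b c d : Fin n, K.Adj a.castSucc b.castSucc →
      K.Adj (Fin.last n) c.castSucc → K.Adj (Fin.last n) d.castSucc →
      g a.castSucc < g c.castSucc → g c.castSucc < g b.castSucc →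
      g b.castSucc < g d.castSucc → False := by
    intro a b c d hab' hcK hdK j1 j2 j3
    set X := Fin.last n
    rcases lt_trichotomy (g X) (g a.castSucc) with h | h | h
    · exact hc X c.castSucc a.castSucc b.castSucc hcK hab' ⟨h, j1, j2⟩
    · exact hXne a h
    · rcases lt_trichotomy (g X) (g b.castSucc) with h' | h' | h'
      · exact hc a.castSucc b.castSucc X d.castSucc hab' hdK ⟨h, h', j3⟩
      · exact hXne b h'
      · exact hc a.castSucc b.castSucc c.castSucc X hab' hcK.symm ⟨j1, j2, h'⟩
  have dab := sup_single_adj G w w' a b hab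
  have dcd := sup_single_adj G w w' c d hcd
  rcases dab with hab' | ⟨rfl, rfl⟩ | ⟨rfl, rfl⟩ <;>
    rcases dcd with hcd' | ⟨rfl, rfl⟩ | ⟨rfl, rfl⟩
  · exact hc _ _ _ _ (hsub _ _ hab') (hsub _ _ hcd') ⟨i1, i2, i3⟩
  · exact key_old_new _ _ _ _ (hsub _ _ hab') hw hw' i1 i2 i3
  · exact key_old_new _ _ _ _ (hsub _ _ hab') hw' hw i1 i2 i3
  · exact key_new_old _ _ _ _ hw hw' (hsub _ _ hcd') i1 i2 i3
  · omega
  · omega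
  · exact key_new_old _ _ _ _ hw' hw (hsub _ _ hcd') i1 i2 i3
  · omega
  · omega

lemma not_isOuterplanar_of_K4 {V : Type*} {G : SimpleGraph V} {p q r s : V}
    (hpq : G.Adj p q) (hpr : G.Adj p r) (hps : G.Adj p s)
    (hqr : G.Adj q r) (hqs : G.Adj q s) (hrs : G.Adj r s) :
    ¬ IsOuterplanar G := by
  rintro ⟨f, hinj, hc⟩
  have hadj : ∀ a b : V, (a = p ∨ a = q ∨ a = r ∨ a = s) →
      (b = p ∨ b = q ∨ b = r ∨ b = s) → f a ≠ f b → G.Adj a b := by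
    have h1 := hpq.symm; have h2 := hpr.symm; have h3 := hps.symm
    have h4 := hqr.symm; have h5 := hqs.symm; have h6 := hrs.symm
    rintro a b (rfl | rfl | rfl | rfl) (rfl | rfl | rfl | rfl) hne <;>
      first | exact absurd rfl hne | assumption
  have d1 : f p ≠ f q := fun h => hpq.ne (hinj h)
  have d2 : f p ≠ f r := fun h => hpr.ne (hinj h)
  have d3 : f p ≠ f s := fun h => hps.ne (hinj h)
  have d4 : f q ≠ f r := fun h => hqr.ne (hinj h)
  have d5 : f q ≠ f s := fun h => hqs.ne (hinj h)
  have d6 : f r ≠ f s := fun h => hrs.ne (hinj h)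
  set T : Finset ℕ := {f p, f q, f r, f s} with hT
  have hTcard : T.card = 4 := by
    rw [hT]
    rw [Finset.card_insert_of_notMem (by simp [d1, d2, d3]),
      Finset.card_insert_of_notMem (by simp [d4, d5]),
      Finset.card_insert_of_notMem (by simp [d6]), Finset.card_singleton]
  have hlen : (T.sort (· ≤ ·)).length = 4 := by rw [Finset.length_sort, hTcard]
  obtain ⟨w1, w2, w3, w4, hl⟩ : ∃ w1 w2 w3 w4, T.sort (· ≤ ·) = [w1, w2, w3, w4] := by
    rcases e : T.sort (· ≤ ·) with _ | ⟨a1, _ | ⟨a2, _ | ⟨a3, _ | ⟨a4, _ | ⟨a5, l⟩⟩⟩⟩⟩ <;>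
      rw [e] at hlen <;> simp at hlen
    exact ⟨a1, a2, a3, a4, rfl⟩
  have hsort : List.Pairwise (· < ·) (T.sort (· ≤ ·)) := (Finset.sortedLT_sort T).pairwise
  rw [hl] at hsort
  simp only [List.pairwise_cons, List.mem_cons, List.mem_singleton, List.not_mem_nil,
    List.Pairwise.nil, and_true, List.mem_nil_iff, forall_eq_or_imp, forall_eq] at hsort
  obtain ⟨⟨h12, h13, h14, -⟩, ⟨h23, h24, -⟩, ⟨h34, -⟩, -⟩ := hsort
  have hmem : ∀ w : ℕ, w ∈ T → ∃ x, (x = p ∨ x = q ∨ x = r ∨ x = s) ∧ f x = w := by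
    intro w hw
    simp only [hT, Finset.mem_insert, Finset.mem_singleton] at hw
    rcases hw with rfl | rfl | rfl | rfl
    exacts [⟨p, Or.inl rfl, rfl⟩, ⟨q, Or.inr (Or.inl rfl), rfl⟩,
      ⟨r, Or.inr (Or.inr (Or.inl rfl)), rfl⟩, ⟨s, Or.inr (Or.inr (Or.inr rfl)), rfl⟩]
  have m1 : w1 ∈ T := by rw [← Finset.mem_sort (· ≤ ·), hl]; simp
  have m2 : w2 ∈ T := by rw [← Finset.mem_sort (· ≤ ·), hl]; simp
  have m3 : w3 ∈ T := by rw [← Finset.mem_sort (· ≤ ·), hl]; simp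
  have m4 : w4 ∈ T := by rw [← Finset.mem_sort (· ≤ ·), hl]; simp
  obtain ⟨v1, hv1, hf1⟩ := hmem w1 m1
  obtain ⟨v2, hv2, hf2⟩ := hmem w2 m2
  obtain ⟨v3, hv3, hf3⟩ := hmem w3 m3
  obtain ⟨v4, hv4, hf4⟩ := hmem w4 m4
  refine hc v1 v3 v2 v4 (hadj v1 v3 hv1 hv3 ?_) (hadj v2 v4 hv2 hv4 ?_) ⟨?_, ?_, ?_⟩ <;>
    simp only [hf1, hf2, hf3, hf4] <;> omega

lemma selection {t n : ℕ} (hn4 : 4 * t ≤ n) (Gs : Fin t → SimpleGraph (Fin n))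
    (hmax : ∀ i, IsMaximalOuterplanar (Gs i)) :
    ∀ m (hm : m ≤ t), ∃ U V : Fin m → Fin n,
      (∀ i : Fin m, GoodPair (Gs (Fin.castLE hm i)) (U i) (V i)) ∧
      (∀ i j : Fin m, i ≠ j → U i ≠ U j ∧ U i ≠ V j ∧ V i ≠ U j ∧ V i ≠ V j) := by
  intro m
  induction m with
  | zero => exact fun _ => ⟨Fin.elim0, Fin.elim0, fun i => i.elim0, fun i => i.elim0⟩
  | succ m ih =>
    intro hm
    obtain ⟨U, V, hgood, hdist⟩ := ih (by omega)
    classical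
    set S : Finset (Fin n) :=
      (Finset.image U Finset.univ) ∪ (Finset.image V Finset.univ) with hS
    have hScard : 2 * S.card + 1 < n := by
      have h1 : S.card ≤ (Finset.image U Finset.univ).card
          + (Finset.image V Finset.univ).card := Finset.card_union_le _ _
      have h2 : (Finset.image U Finset.univ).card ≤ m := by
        refine le_trans (Finset.card_image_le) ?_
        rw [Finset.card_univ, Fintype.card_fin]
      have h3 : (Finset.image V Finset.univ).card ≤ m := by
        refine le_trans (Finset.card_image_le) ?_
        rw [Finset.card_univ, Fintype.card_fin]
      omega
    obtain ⟨u, v, hgp, hu, hv⟩ := exists_goodPair (hmax (Fin.castLE hm (Fin.last m))) S hScard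
    have hmemU : ∀ j : Fin m, U j ∈ S := by
      intro j
      exact Finset.mem_union_left _ (Finset.mem_image.2 ⟨j, Finset.mem_univ j, rfl⟩)
    have hmemV : ∀ j : Fin m, V j ∈ S := by
      intro j
      exact Finset.mem_union_right _ (Finset.mem_image.2 ⟨j, Finset.mem_univ j, rfl⟩)
    refine ⟨Fin.snoc U u, Fin.snoc V v, ?_, ?_⟩
    · intro i
      induction i using Fin.lastCases with
      | last => rw [Fin.snoc_last, Fin.snoc_last]; exact hgp
      | cast j => rw [Fin.snoc_castSucc, Fin.snoc_castSucc]; exact hgood j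
    · intro i j hij
      induction i using Fin.lastCases with
      | last =>
        induction j using Fin.lastCases with
        | last => exact absurd rfl hij
        | cast j =>
          rw [Fin.snoc_last, Fin.snoc_last, Fin.snoc_castSucc, Fin.snoc_castSucc]
          exact ⟨fun h => hu (h ▸ hmemU j), fun h => hu (h ▸ hmemV j),
            fun h => hv (h ▸ hmemU j), fun h => hv (h ▸ hmemV j)⟩
      | cast i =>
        induction j using Fin.lastCases with
        | last =>
          rw [Fin.snoc_last, Fin.snoc_last, Fin.snoc_castSucc, Fin.snoc_castSucc]
          exact ⟨fun h => hu (h ▸ hmemU i), fun h => hv (h ▸ hmemU i),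
            fun h => hu (h ▸ hmemV i), fun h => hv (h ▸ hmemV i)⟩
        | cast j =>
          rw [Fin.snoc_castSucc, Fin.snoc_castSucc, Fin.snoc_castSucc, Fin.snoc_castSucc]
          exact hdist i j (fun h => hij (by rw [h]))

/-- add a new vertex adjacent to `u` and `v` -/
def extGraph {n : ℕ} (G : SimpleGraph (Fin n)) (u v : Fin n) : SimpleGraph (Fin (n + 1)) :=
  G.map (⟨Fin.castSucc, Fin.castSucc_injective n⟩ : Fin n ↪ Fin (n + 1)) ⊔
    SimpleGraph.fromEdgeSet {s(u.castSucc, Fin.last n), s(v.castSucc, Fin.last n)}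

lemma castSucc_ne_last' {n : ℕ} (w : Fin n) : w.castSucc ≠ Fin.last n :=
  (Fin.castSucc_lt_last w).ne

lemma extGraph_adj_cast {n : ℕ} {G : SimpleGraph (Fin n)} {u v p q : Fin n}
    (h : G.Adj p q) : (extGraph G u v).Adj p.castSucc q.castSucc :=
  (SimpleGraph.sup_adj _ _ _ _).mpr (Or.inl (SimpleGraph.map_adj_apply.mpr h))

lemma extGraph_adj_u {n : ℕ} {G : SimpleGraph (Fin n)} {u v : Fin n} :
    (extGraph G u v).Adj u.castSucc (Fin.last n) :=
  (SimpleGraph.sup_adj _ _ _ _).mpr (Or.inr ((SimpleGraph.fromEdgeSet_adj _).mpr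
    ⟨Set.mem_insert _ _, castSucc_ne_last' u⟩))

lemma extGraph_adj_v {n : ℕ} {G : SimpleGraph (Fin n)} {u v : Fin n} :
    (extGraph G u v).Adj v.castSucc (Fin.last n) :=
  (SimpleGraph.sup_adj _ _ _ _).mpr (Or.inr ((SimpleGraph.fromEdgeSet_adj _).mpr
    ⟨Set.mem_insert_of_mem _ rfl, castSucc_ne_last' v⟩))

lemma extGraph_adj_elim {n : ℕ} {G : SimpleGraph (Fin n)} {u v : Fin n} {a b : Fin (n + 1)}
    (h : (extGraph G u v).Adj a b) :
    (∃ p q, G.Adj p q ∧ p.castSucc = a ∧ q.castSucc = b) ∨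
      ((a = u.castSucc ∧ b = Fin.last n) ∨ (b = u.castSucc ∧ a = Fin.last n) ∨
        (a = v.castSucc ∧ b = Fin.last n) ∨ (b = v.castSucc ∧ a = Fin.last n)) := by
  rw [extGraph, SimpleGraph.sup_adj, SimpleGraph.map_adj, SimpleGraph.fromEdgeSet_adj] at h
  rcases h with ⟨p, q, hpq, hp, hq⟩ | ⟨hmem, hne⟩
  · exact Or.inl ⟨p, q, hpq, hp, hq⟩
  · simp only [Set.mem_insert_iff, Set.mem_singleton_iff, Sym2.eq_iff] at hmem
    tauto

lemma extGraph_outerplanar {n : ℕ} {G : SimpleGraph (Fin n)} {u v : Fin n}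
    (hgp : GoodPair G u v) : IsOuterplanar (extGraph G u v) := by
  obtain ⟨hadj, f, hinj, hcf, hlt, hholl⟩ := hgp
  set g : Fin (n + 1) → ℕ :=
    fun w => Fin.lastCases (2 * f u + 1) (fun w' => 2 * f w') w with hg
  have gcast : ∀ w : Fin n, g w.castSucc = 2 * f w := fun w => by
    simp [hg]
  have glast : g (Fin.last n) = 2 * f u + 1 := by simp [hg]
  have hginj : Function.Injective g := by
    intro x y h
    induction x using Fin.lastCases with
    | last =>
      induction y using Fin.lastCases with
      | last => rfl
      | cast y => rw [glast, gcast] at h; omega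
    | cast x =>
      induction y using Fin.lastCases with
      | last => rw [glast, gcast] at h; omega
      | cast y =>
        rw [gcast, gcast] at h
        exact congrArg Fin.castSucc (hinj (by omega))
  refine ⟨g, hginj, ?_⟩
  have hdecomp : extGraph G u v =
      (G.map (⟨Fin.castSucc, Fin.castSucc_injective n⟩ : Fin n ↪ Fin (n + 1)) ⊔
        SimpleGraph.fromEdgeSet {s(u.castSucc, Fin.last n)}) ⊔
        SimpleGraph.fromEdgeSet {s(v.castSucc, Fin.last n)} := by
    rw [extGraph, Set.insert_eq, SimpleGraph.fromEdgeSet_union, sup_assoc]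
  rw [hdecomp]
  have hbase : CrossFree (G.map (⟨Fin.castSucc, Fin.castSucc_injective n⟩ : Fin n ↪ Fin (n + 1))) g := by
    rintro a b c d hab hcd ⟨i1, i2, i3⟩
    rw [SimpleGraph.map_adj] at hab hcd
    obtain ⟨p, q, hpq, rfl, rfl⟩ := hab
    obtain ⟨p', q', hpq', rfl, rfl⟩ := hcd
    simp only [Function.Embedding.coeFn_mk, gcast] at i1 i2 i3
    exact hcf p q p' q' hpq hpq' ⟨by omega, by omega, by omega⟩
  have hstep1 := crossFree_sup_hollow (u := u.castSucc) (v := Fin.last n) hbase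
    (by rintro w ⟨ha, hb⟩; rw [gcast] at ha; rw [glast] at hb; omega)
    (by rintro w ⟨ha, hb⟩; rw [gcast] at hb; rw [glast] at ha; omega)
  refine crossFree_sup_hollow (u := v.castSucc) (v := Fin.last n) hstep1 ?_ ?_
  · rintro w ⟨ha, hb⟩
    rw [gcast] at ha; rw [glast] at hb; omega
  · rintro w ⟨ha, hb⟩
    rw [glast] at ha; rw [gcast] at hb
    induction w using Fin.lastCases with
    | last => rw [glast] at ha; omega
    | cast w =>
      rw [gcast] at ha
      rw [gcast] at hb
      exact hholl w ⟨by omega, by omega⟩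

lemma extGraph_no_add_last {n : ℕ} {G : SimpleGraph (Fin n)} {u v : Fin n}
    (hmaxG : IsMaximalOuterplanar G) (hgp : GoodPair G u v) {c : Fin n}
    (hnadj : ¬ (extGraph G u v).Adj c.castSucc (Fin.last n))
    {g : Fin (n + 1) → ℕ} (hginj : Function.Injective g)
    (hcK : CrossFree ((extGraph G u v) ⊔
      SimpleGraph.fromEdgeSet {s(c.castSucc, Fin.last n)}) g) : False := by
  set K := (extGraph G u v) ⊔ SimpleGraph.fromEdgeSet {s(c.castSucc, Fin.last n)} with hK
  have hsub : ∀ p q : Fin n, G.Adj p q → K.Adj p.castSucc q.castSucc :=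
    fun p q h => (SimpleGraph.sup_adj _ _ _ _).mpr (Or.inl (extGraph_adj_cast h))
  have hKu : K.Adj (Fin.last n) u.castSucc :=
    ((SimpleGraph.sup_adj _ _ _ _).mpr (Or.inl extGraph_adj_u)).symm
  have hKv : K.Adj (Fin.last n) v.castSucc :=
    ((SimpleGraph.sup_adj _ _ _ _).mpr (Or.inl extGraph_adj_v)).symm
  have hKc : K.Adj (Fin.last n) c.castSucc := by
    have h : K.Adj c.castSucc (Fin.last n) :=
      (SimpleGraph.sup_adj _ _ _ _).mpr (Or.inr ((SimpleGraph.fromEdgeSet_adj _).mpr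
        ⟨Set.mem_singleton _, castSucc_ne_last' c⟩))
    exact h.symm
  have hcu : c ≠ u := by
    rintro rfl
    exact hnadj extGraph_adj_u
  have hcv : c ≠ v := by
    rintro rfl
    exact hnadj extGraph_adj_v
  by_cases hgu : G.Adj c u
  · by_cases hgv : G.Adj c v
    · exact not_isOuterplanar_of_K4 (G := K) (hsub u v hgp.1) (hsub u c hgu.symm)
        hKu.symm (hsub v c hgv.symm) hKv.symm hKc.symm ⟨g, hginj, hcK⟩
    · exact hmaxG.2 c v hcv hgv (lemR hsub hginj hcK hKc hKv)
  · exact hmaxG.2 c u hcu hgu (lemR hsub hginj hcK hKc hKu)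

lemma extGraph_maximal {n : ℕ} {G : SimpleGraph (Fin n)} {u v : Fin n}
    (hmaxG : IsMaximalOuterplanar G) (hgp : GoodPair G u v) :
    IsMaximalOuterplanar (extGraph G u v) := by
  refine ⟨extGraph_outerplanar hgp, ?_⟩
  intro a b hne hnadj hop
  by_cases ha : a = Fin.last n
  · subst ha
    have hb : b ≠ Fin.last n := fun h => hne h.symm
    obtain ⟨b', rfl⟩ := Fin.exists_castSucc_eq.mpr hb
    rw [Sym2.eq_swap] at hop
    obtain ⟨g, hginj, hc⟩ := hop
    exact extGraph_no_add_last hmaxG hgp (fun h => hnadj h.symm) hginj hc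
  · by_cases hb : b = Fin.last n
    · subst hb
      obtain ⟨a', rfl⟩ := Fin.exists_castSucc_eq.mpr ha
      obtain ⟨g, hginj, hc⟩ := hop
      exact extGraph_no_add_last hmaxG hgp hnadj hginj hc
    · obtain ⟨a', rfl⟩ := Fin.exists_castSucc_eq.mpr ha
      obtain ⟨b', rfl⟩ := Fin.exists_castSucc_eq.mpr hb
      obtain ⟨g, hginj, hc⟩ := hop
      have hne' : a' ≠ b' := fun h => hne (congrArg Fin.castSucc h)
      have hnadj' : ¬ G.Adj a' b' := fun h => hnadj (extGraph_adj_cast h)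
      refine hmaxG.2 a' b' hne' hnadj' ⟨g ∘ Fin.castSucc,
        hginj.comp (Fin.castSucc_injective n), ?_⟩
      rintro p q r s hpq hrs ⟨i1, i2, i3⟩
      have hlift : ∀ x y : Fin n,
          (G ⊔ SimpleGraph.fromEdgeSet {s(a', b')}).Adj x y →
          ((extGraph G u v) ⊔
            SimpleGraph.fromEdgeSet {s(a'.castSucc, b'.castSucc)}).Adj
            x.castSucc y.castSucc := by
        intro x y hxy
        rcases sup_single_adj G a' b' x y hxy with h | ⟨rfl, rfl⟩ | ⟨rfl, rfl⟩
        · exact (SimpleGraph.sup_adj _ _ _ _).mpr (Or.inl (extGraph_adj_cast h))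
        all_goals refine (SimpleGraph.sup_adj _ _ _ _).mpr (Or.inr
          ((SimpleGraph.fromEdgeSet_adj _).mpr ⟨?_, ?_⟩))
        all_goals first
          | exact Set.mem_singleton _
          | (rw [Sym2.eq_swap]; exact Set.mem_singleton _)
          | (simp only [ne_eq, Fin.castSucc_inj]
             first
               | exact hne'
               | exact fun h => hne' h.symm)
      exact hc _ _ _ _ (hlift _ _ hpq) (hlift _ _ hrs) ⟨i1, i2, i3⟩

lemma extGraph_disjoint {n : ℕ} {G G' : SimpleGraph (Fin n)} {u v u' v' : Fin n}
    (hd : Disjoint G.edgeSet G'.edgeSet)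
    (h1 : u ≠ u') (h2 : u ≠ v') (h3 : v ≠ u') (h4 : v ≠ v') :
    Disjoint (extGraph G u v).edgeSet (extGraph G' u' v').edgeSet := by
  rw [Set.disjoint_left]
  intro e he he'
  induction e using Sym2.ind with
  | _ a b =>
  rw [SimpleGraph.mem_edgeSet] at he he'
  have d1 := extGraph_adj_elim he
  have d2 := extGraph_adj_elim he'
  rcases d1 with ⟨p, q, hpq, rfl, rfl⟩ | hnew1
  · rcases d2 with ⟨p', q', hpq', hp', hq'⟩ | hnew2
    · have hep : p' = p := Fin.castSucc_injective n hp'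
      have heq : q' = q := Fin.castSucc_injective n hq'
      subst hep; subst heq
      exact Set.disjoint_left.mp hd ((SimpleGraph.mem_edgeSet _).mpr hpq)
        ((SimpleGraph.mem_edgeSet _).mpr hpq')
    · rcases hnew2 with ⟨hA, hB⟩ | ⟨hA, hB⟩ | ⟨hA, hB⟩ | ⟨hA, hB⟩ <;>
        first
          | exact castSucc_ne_last' q hB
          | exact castSucc_ne_last' p hB
  · rcases d2 with ⟨p', q', hpq', hp', hq'⟩ | hnew2
    · rcases hnew1 with ⟨hA, hB⟩ | ⟨hA, hB⟩ | ⟨hA, hB⟩ | ⟨hA, hB⟩ <;>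
        first
          | exact castSucc_ne_last' q' (hq'.trans hB)
          | exact castSucc_ne_last' p' (hp'.trans hB)
    · rcases hnew1 with ⟨hA, hB⟩ | ⟨hA, hB⟩ | ⟨hA, hB⟩ | ⟨hA, hB⟩ <;>
        rcases hnew2 with ⟨hA', hB'⟩ | ⟨hA', hB'⟩ | ⟨hA', hB'⟩ | ⟨hA', hB'⟩ <;>
        first
          | exact h1 (Fin.castSucc_injective n (hA.symm.trans hA'))
          | exact h2 (Fin.castSucc_injective n (hA.symm.trans hA'))
          | exact h3 (Fin.castSucc_injective n (hA.symm.trans hA'))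
          | exact h4 (Fin.castSucc_injective n (hA.symm.trans hA'))
          | exact castSucc_ne_last' _ (hA'.symm.trans hB)
          | exact castSucc_ne_last' _ (hA.symm.trans hB')

theorem stmt_12 (t n : ℕ) (ht : 1 ≤ t) (hn : 4 * t ≤ n)
    (Gs : Fin t → SimpleGraph (Fin n))
    (hmax : ∀ i, IsMaximalOuterplanar (Gs i))
    (hdisj : ∀ i j, i ≠ j → Disjoint (Gs i).edgeSet (Gs j).edgeSet) :
    ∃ Hs : Fin t → SimpleGraph (Fin (n + 1)),
      (∀ i, IsMaximalOuterplanar (Hs i)) ∧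
      (∀ i j, i ≠ j → Disjoint (Hs i).edgeSet (Hs j).edgeSet) := by
  obtain ⟨U, V, hgood, hdist⟩ := selection hn Gs hmax t le_rfl
  refine ⟨fun i => extGraph (Gs i) (U i) (V i),
    fun i => extGraph_maximal (hmax i) (hgood i), fun i j hij => ?_⟩
  obtain ⟨d1, d2, d3, d4⟩ := hdist i j hij
  exact extGraph_disjoint (hdisj i j hij) d1 d2 d3 d4
end

section
/- The graph K_8 minus a perfect matching of two independent edges decomposes into two edge-disjoint maximal outerplanar graphs on 8 vertices; in particular there exists a graph on 8 vertices with 26 edges that is the edge-disjoint union of two outerplanar graphs. -/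
lemma key (n : ℕ) : ∀ (S : Finset ℕ) (E : Finset (ℕ × ℕ)),
    S.card = n →
    (∀ p ∈ E, p.1 < p.2 ∧ p.1 ∈ S ∧ p.2 ∈ S) →
    (∀ p ∈ E, ∀ q ∈ E, ¬(p.1 < q.1 ∧ q.1 < p.2 ∧ p.2 < q.2)) →
    E.Nonempty → E.card + 3 ≤ 2 * S.card := by
  induction n using Nat.strong_induction_on with
  | _ n ih =>
    intro S E hn hend hcross hne
    have hSne : S.Nonempty := by
      obtain ⟨p, hp⟩ := hne
      exact ⟨p.1, (hend p hp).2.1⟩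
    have hS2 : 2 ≤ S.card := by
      obtain ⟨p, hp⟩ := hne
      obtain ⟨h1, h2, h3⟩ := hend p hp
      exact Finset.one_lt_card_iff.mpr ⟨p.1, p.2, h2, h3, Nat.ne_of_lt h1⟩
    by_cases hlong : ∃ p ∈ E, ∃ c ∈ S, p.1 < c ∧ c < p.2
    · -- long case
      set L := E.filter (fun p => ∃ c ∈ S, p.1 < c ∧ c < p.2) with hL
      have hLne : L.Nonempty := by
        obtain ⟨p, hp, hc⟩ := hlong
        exact ⟨p, Finset.mem_filter.mpr ⟨hp, hc⟩⟩
      obtain ⟨p₀, hp₀L, hmin⟩ := L.exists_min_image (fun p => p.2 - p.1) hLne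
      obtain ⟨hp₀E, c₀, hc₀S, hc₀1, hc₀2⟩ := Finset.mem_filter.mp hp₀L
      set a := p₀.1 with ha
      set b := p₀.2 with hb
      have hab : a < b := (hend p₀ hp₀E).1
      have haS : a ∈ S := (hend p₀ hp₀E).2.1
      have hbS : b ∈ S := (hend p₀ hp₀E).2.2
      set S₁ := S.filter (fun x => a ≤ x ∧ x ≤ b) with hS₁
      set S₂ := S.filter (fun x => x ≤ a ∨ b ≤ x) with hS₂
      set E₁ := E.filter (fun p => a ≤ p.1 ∧ p.2 ≤ b) with hE₁
      set E₂ := E \ E₁ with hE₂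
      -- edges outside E₁ have endpoints outside the open interval (a,b)
      have hout : ∀ p ∈ E₂, (p.1 ≤ a ∨ b ≤ p.1) ∧ (p.2 ≤ a ∨ b ≤ p.2) := by
        intro p hp
        obtain ⟨hpE, hpn⟩ := Finset.mem_sdiff.mp hp
        have hpne : ¬(a ≤ p.1 ∧ p.2 ≤ b) := by
          intro h; exact hpn (Finset.mem_filter.mpr ⟨hpE, h⟩)
        have h1 := (hend p hpE).1
        have hA := hcross p₀ hp₀E p hpE
        have hB := hcross p hpE p₀ hp₀E
        constructor
        · by_contra h; push_neg at h
          obtain ⟨ha1, hb1⟩ := h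
          -- a < p.1 < b
          rcases le_or_gt p.2 b with h2 | h2
          · exact hpne ⟨le_of_lt ha1, h2⟩
          · exact hA ⟨ha1, hb1, h2⟩
        · by_contra h; push_neg at h
          obtain ⟨ha2, hb2⟩ := h
          rcases lt_or_ge p.1 a with h2 | h2
          · exact hB ⟨h2, ha2, hb2⟩
          · exact hpne ⟨h2, le_of_lt hb2⟩
      -- E₁ minus p₀ consists of short edges
      have hshort : ∀ q ∈ E₁, q ≠ p₀ → ∀ c ∈ S, ¬(q.1 < c ∧ c < q.2) := by
        intro q hq hqne c hcS hcc
        obtain ⟨hqE, hq1, hq2⟩ := Finset.mem_filter.mp hq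
        have hqL : q ∈ L := Finset.mem_filter.mpr ⟨hqE, c, hcS, hcc⟩
        have := hmin q hqL
        have hqlt : q.1 < q.2 := (hend q hqE).1
        -- q ≠ p₀ yet a ≤ q.1, q.2 ≤ b, so span strictly smaller unless equal
        have : q.1 = a ∧ q.2 = b := by omega
        exact hqne (Prod.ext this.1 this.2)
      -- card of E₁
      have hS₁3 : 3 ≤ S₁.card := by
        have : ({a, c₀, b} : Finset ℕ) ⊆ S₁ := by
          intro x hx
          simp only [Finset.mem_insert, Finset.mem_singleton] at hx
          rcases hx with rfl | rfl | rfl <;>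
            · refine Finset.mem_filter.mpr ⟨by assumption, by omega⟩
        calc 3 = ({a, c₀, b} : Finset ℕ).card := by
                rw [Finset.card_insert_of_notMem (by simp; omega),
                  Finset.card_insert_of_notMem (by simp; omega), Finset.card_singleton]
          _ ≤ S₁.card := Finset.card_le_card this
      have hE₁card : E₁.card ≤ S₁.card := by
        have herase : (E₁.erase p₀).card ≤ (S₁.erase b).card := by
          apply Finset.card_le_card_of_injOn (fun p => p.1)
          · intro q hq
            obtain ⟨hqne, hqE₁⟩ := Finset.mem_erase.mp hq
            obtain ⟨hqE, hql, hqr⟩ := Finset.mem_filter.mp hqE₁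
            have h1 := (hend q hqE).1
            refine Finset.mem_erase.mpr ⟨by dsimp only; omega, ?_⟩
            exact Finset.mem_filter.mpr ⟨(hend q hqE).2.1, by dsimp only; omega⟩
          · intro q hq q' hq' heq
            have heq' : q.1 = q'.1 := heq
            obtain ⟨hqne, hqE₁⟩ := Finset.mem_erase.mp hq
            obtain ⟨hq'ne, hq'E₁⟩ := Finset.mem_erase.mp hq'
            have hqE := (Finset.mem_filter.mp hqE₁).1
            have hq'E := (Finset.mem_filter.mp hq'E₁).1
            have h1 := (hend q hqE).1
            have h2 := (hend q' hq'E).1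
            by_contra hne'
            have hne2 : q.2 ≠ q'.2 := by
              intro h; exact hne' (Prod.ext heq h)
            rcases lt_or_gt_of_ne hne2 with h | h
            · exact hshort q' hq'E₁ hq'ne q.2 (hend q hqE).2.2 ⟨by omega, h⟩
            · exact hshort q hqE₁ hqne q'.2 (hend q' hq'E).2.2 ⟨by omega, h⟩

        have hp₀E₁ : p₀ ∈ E₁ := Finset.mem_filter.mpr ⟨hp₀E, le_refl a, le_refl b⟩
        have hbS₁ : b ∈ S₁ := Finset.mem_filter.mpr ⟨hbS, by omega⟩
        have e1 : E₁.card = (E₁.erase p₀).card + 1 :=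
          (Finset.card_erase_add_one hp₀E₁).symm
        have e2 : (S₁.erase b).card + 1 = S₁.card := Finset.card_erase_add_one hbS₁
        omega
      -- E₂ with p₀ added, apply IH on S₂
      have hc₀notS₂ : c₀ ∉ S₂ := by
        intro h
        have := (Finset.mem_filter.mp h).2
        omega
      have hS₂lt : S₂.card < S.card := by
        apply Finset.card_lt_card
        refine ⟨Finset.filter_subset _ _, fun h => hc₀notS₂ (h hc₀S)⟩
      have hp₀S₂ : a ∈ S₂ ∧ b ∈ S₂ := by
        constructor <;> refine Finset.mem_filter.mpr ⟨by assumption, by omega⟩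
      have hp₀notE₂ : p₀ ∉ E₂ := by
        intro h
        exact (Finset.mem_sdiff.mp h).2 (Finset.mem_filter.mpr ⟨hp₀E, le_refl a, le_refl b⟩)
      have hIH : (insert p₀ E₂).card + 3 ≤ 2 * S₂.card := by
        refine ih S₂.card (by omega) S₂ (insert p₀ E₂) rfl ?_ ?_ ⟨p₀, Finset.mem_insert_self _ _⟩
        · intro p hp
          rcases Finset.mem_insert.mp hp with rfl | hp
          · exact ⟨hab, hp₀S₂⟩
          · obtain ⟨hpE, _⟩ := Finset.mem_sdiff.mp hp
            obtain ⟨h1, h2⟩ := hout p hp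
            refine ⟨(hend p hpE).1, ?_, ?_⟩ <;>
              · refine Finset.mem_filter.mpr ⟨?_, by tauto⟩
                first | exact (hend p hpE).2.1 | exact (hend p hpE).2.2
        · intro p hp q hq
          rcases Finset.mem_insert.mp hp with rfl | hp <;>
            rcases Finset.mem_insert.mp hq with rfl | hq
          · omega
          · have := hout q hq
            have := (hend q (Finset.mem_sdiff.mp hq).1).1
            omega
          · have := hout p hp
            have := (hend p (Finset.mem_sdiff.mp hp).1).1
            omega
          · exact hcross p (Finset.mem_sdiff.mp hp).1 q (Finset.mem_sdiff.mp hq).1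
      -- cardinalities of S₁, S₂
      have hSunion : S₁ ∪ S₂ = S := by
        apply Finset.Subset.antisymm
        · intro x hx
          rcases Finset.mem_union.mp hx with h | h <;> exact (Finset.mem_filter.mp h).1
        · intro x hx
          rcases le_or_gt x a with h | h
          · exact Finset.mem_union_right _ (Finset.mem_filter.mpr ⟨hx, Or.inl h⟩)
          · rcases le_or_gt x b with h2 | h2
            · exact Finset.mem_union_left _ (Finset.mem_filter.mpr ⟨hx, le_of_lt h, h2⟩)
            · exact Finset.mem_union_right _ (Finset.mem_filter.mpr ⟨hx, Or.inr (le_of_lt h2)⟩)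
      have hSinter : S₁ ∩ S₂ = {a, b} := by
        apply Finset.Subset.antisymm
        · intro x hx
          obtain ⟨h1, h2⟩ := Finset.mem_inter.mp hx
          have g1 := (Finset.mem_filter.mp h1).2
          have g2 := (Finset.mem_filter.mp h2).2
          simp only [Finset.mem_insert, Finset.mem_singleton]
          omega
        · intro x hx
          simp only [Finset.mem_insert, Finset.mem_singleton] at hx
          rcases hx with rfl | rfl <;>
            · refine Finset.mem_inter.mpr ⟨Finset.mem_filter.mpr ⟨by assumption, by omega⟩,
                Finset.mem_filter.mpr ⟨by assumption, by omega⟩⟩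
      have hScards : S₁.card + S₂.card = S.card + 2 := by
        have := Finset.card_union_add_card_inter S₁ S₂
        rw [hSunion, hSinter] at this
        have : ({a, b} : Finset ℕ).card = 2 := by
          rw [Finset.card_insert_of_notMem (by simp; omega), Finset.card_singleton]
        omega
      have hEcards : E.card = E₁.card + E₂.card := by
        have h1 : E₁ ⊆ E := Finset.filter_subset _ _
        have h2 := Finset.card_sdiff_add_card_eq_card h1
        rw [hE₂]
        omega
      have hinsert : (insert p₀ E₂).card = E₂.card + 1 :=
        Finset.card_insert_of_notMem hp₀notE₂
      rw [hinsert] at hIH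
      have h4 : E₂.card + 4 ≤ 2 * S₂.card := by omega
      have h5 : E₁.card + 3 ≤ 2 * S₁.card := by omega
      have h6 : E.card = E₁.card + E₂.card := hEcards
      omega
    · -- no long edges : all edges short
      push_neg at hlong
      have hmaxS := S.max'_mem hSne
      have hcard : E.card ≤ (S.erase (S.max' hSne)).card := by
        apply Finset.card_le_card_of_injOn (fun p => p.1)
        · intro p hp
          obtain ⟨h1, h2, h3⟩ := hend p hp
          have : p.2 ≤ S.max' hSne := S.le_max' _ h3
          exact Finset.mem_erase.mpr ⟨by dsimp only; omega, h2⟩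
        · intro p hp q hq heq
          have heq' : p.1 = q.1 := heq
          by_contra hne'
          have hne2 : p.2 ≠ q.2 := fun h => hne' (Prod.ext heq h)
          have h1 := (hend p hp).1
          have h2 := (hend q hq).1
          rcases lt_or_gt_of_ne hne2 with h | h
          · have := hlong q hq p.2 (hend p hp).2.2 (by omega)
            omega
          · have := hlong p hp q.2 (hend q hq).2.2 (by omega)
            omega
      have := Finset.card_erase_add_one hmaxS
      omega

lemma minmax_aux {p q r s : ℕ} (h : p ≠ q)
    (he : (min p q, max p q) = (min r s, max r s)) :
    (p = r ∧ q = s) ∨ (p = s ∧ q = r) := by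
  have h1 : min p q = min r s := congrArg Prod.fst he
  have h2 : max p q = max r s := congrArg Prod.snd he
  rcases le_total p q with h3 | h3 <;> rcases le_total r s with h4 | h4 <;>
    simp [min_eq_left, min_eq_right, max_eq_left, max_eq_right, h3, h4] at h1 h2 <;> omega

lemma outerplanar_card_le {G : SimpleGraph (Fin 8)} (h : IsOuterplanar G) :
    G.edgeSet.ncard ≤ 13 := by
  classical
  obtain ⟨f, hinj, hcr⟩ := h
  set φ : Sym2 (Fin 8) → ℕ × ℕ :=
    Sym2.lift ⟨fun a b => (min (f a) (f b), max (f a) (f b)),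
      fun a b => by simp [min_comm, max_comm]⟩ with hφ
  have hfin : G.edgeSet.Finite := Set.toFinite _
  set F : Finset (Sym2 (Fin 8)) := hfin.toFinset with hF
  have hmemF : ∀ e, e ∈ F ↔ e ∈ G.edgeSet := fun e => hfin.mem_toFinset
  set E : Finset (ℕ × ℕ) := F.image φ with hE
  set S : Finset ℕ := Finset.univ.image f with hS
  have hcardS : S.card = 8 := by
    rw [hS, Finset.card_image_of_injective _ hinj, Finset.card_univ, Fintype.card_fin]
  -- representative extraction
  have hrep : ∀ p ∈ E, ∃ u v : Fin 8, G.Adj u v ∧ f u = p.1 ∧ f v = p.2 := by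
    intro p hp
    obtain ⟨e, heF, hpe⟩ := Finset.mem_image.mp hp
    have hadj : e ∈ G.edgeSet := (hmemF e).mp heF
    induction e with
    | _ u v =>
      rw [SimpleGraph.mem_edgeSet] at hadj
      rcases le_total (f u) (f v) with h1 | h1
      · exact ⟨u, v, hadj, by rw [← hpe]; simp [hφ, min_eq_left h1],
          by rw [← hpe]; simp [hφ, max_eq_right h1]⟩
      · exact ⟨v, u, hadj.symm, by rw [← hpe]; simp [hφ, min_eq_right h1],
          by rw [← hpe]; simp [hφ, max_eq_left h1]⟩
  have hend : ∀ p ∈ E, p.1 < p.2 ∧ p.1 ∈ S ∧ p.2 ∈ S := by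
    intro p hp
    obtain ⟨u, v, hadj, h1, h2⟩ := hrep p hp
    have hne : f u ≠ f v := fun h => G.ne_of_adj hadj (hinj h)
    have huv : f u ≤ f v := by
      obtain ⟨e, heF, hpe⟩ := Finset.mem_image.mp hp
      induction e with
      | _ x y =>
        have : p.1 ≤ p.2 := by rw [← hpe]; simp [hφ]
        omega
    refine ⟨by omega, ?_, ?_⟩
    · rw [hS, ← h1]; exact Finset.mem_image_of_mem f (Finset.mem_univ u)
    · rw [hS, ← h2]; exact Finset.mem_image_of_mem f (Finset.mem_univ v)
  have hcross : ∀ p ∈ E, ∀ q ∈ E, ¬(p.1 < q.1 ∧ q.1 < p.2 ∧ p.2 < q.2) := by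
    intro p hp q hq ⟨h1, h2, h3⟩
    obtain ⟨u, v, huv, hu, hv⟩ := hrep p hp
    obtain ⟨x, y, hxy, hx, hy⟩ := hrep q hq
    exact hcr u v x y huv hxy (by omega)
  have hcardE : E.card = F.card := by
    apply Finset.card_image_of_injOn
    intro e he e' he' heq
    have hadj : e ∈ G.edgeSet := (hmemF e).mp he
    have hadj' : e' ∈ G.edgeSet := (hmemF e').mp he'
    induction e with
    | _ u v =>
      induction e' with
      | _ x y =>
        rw [SimpleGraph.mem_edgeSet] at hadj hadj'
        have hne : f u ≠ f v := fun h => G.ne_of_adj hadj (hinj h)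
        have heq2 : (min (f u) (f v), max (f u) (f v))
            = (min (f x) (f y), max (f x) (f y)) := by simpa [hφ] using heq
        rcases minmax_aux hne heq2 with ⟨ha, hb⟩ | ⟨ha, hb⟩
        · rw [Sym2.eq_iff]; exact Or.inl ⟨hinj ha, hinj hb⟩
        · rw [Sym2.eq_iff]; exact Or.inr ⟨hinj ha, hinj hb⟩
  have hncard : G.edgeSet.ncard = F.card := by
    rw [hF]; exact Set.ncard_eq_toFinset_card _ hfin
  rcases E.eq_empty_or_nonempty with he | hne
  · have : F = ∅ := by
      by_contra hF0
      obtain ⟨e, heF⟩ := Finset.nonempty_of_ne_empty hF0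
      have : φ e ∈ E := Finset.mem_image_of_mem _ heF
      simp [he] at this
    simp [hncard, this]
  · have := key 8 S E hcardS hend hcross hne
    omega

lemma isMaxOuter {G : SimpleGraph (Fin 8)} (hG : IsOuterplanar G)
    (hc : G.edgeSet.ncard = 13) : IsMaximalOuterplanar G := by
  refine ⟨hG, fun u v hne hnadj hout => ?_⟩
  have h0 : ({s(u,v)} : Set (Sym2 (Fin 8))) \ {e | e.IsDiag} = {s(u,v)} := by
    ext e
    simp only [Set.mem_diff, Set.mem_singleton_iff, Set.mem_setOf_eq, and_iff_left_iff_imp]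
    rintro rfl
    exact fun hd => hne (Sym2.mk_isDiag_iff.mp hd)
  have h1 : (G ⊔ SimpleGraph.fromEdgeSet {s(u,v)}).edgeSet = insert s(u,v) G.edgeSet := by
    rw [SimpleGraph.edgeSet_sup, SimpleGraph.edgeSet_fromEdgeSet, Sym2.diagSet, h0, Set.union_singleton]
  have h2 := outerplanar_card_le hout
  rw [h1, Set.ncard_insert_of_notMem (fun hm => hnadj ((SimpleGraph.mem_edgeSet G).mp hm))] at h2
  omega

def code (a b : Fin 8) : ℕ := min a.val b.val * 8 + max a.val b.val

def e1 : List ℕ := [1,10,19,28,37,46,55,7,2,20,38,6,4]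
def e2 : List ℕ := [3,30,14,12,39,23,21,5,11,29,47,15,13]

def G1 : SimpleGraph (Fin 8) where
  Adj a b := code a b ∈ e1
  symm := ⟨fun a b h => by simpa [code, min_comm, max_comm] using h⟩
  loopless := ⟨by intro a; revert a; decide⟩

def G2 : SimpleGraph (Fin 8) where
  Adj a b := code a b ∈ e2
  symm := ⟨fun a b h => by simpa [code, min_comm, max_comm] using h⟩
  loopless := ⟨by intro a; revert a; decide⟩

instance : DecidableRel G1.Adj := fun a b => inferInstanceAs (Decidable (code a b ∈ e1))
instance : DecidableRel G2.Adj := fun a b => inferInstanceAs (Decidable (code a b ∈ e2))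

lemma G1card : G1.edgeSet.ncard = 13 := by
  rw [← SimpleGraph.coe_edgeFinset, Set.ncard_coe_finset]
  decide

lemma G2card : G2.edgeSet.ncard = 13 := by
  rw [← SimpleGraph.coe_edgeFinset, Set.ncard_coe_finset]
  decide

lemma G1outer : IsOuterplanar G1 := by
  refine ⟨fun v => v.val, fun a b h => Fin.val_injective h, ?_⟩
  decide

lemma G2outer : IsOuterplanar G2 := by
  refine ⟨fun v => (3 * v.val) % 8, ?_, ?_⟩
  · intro a b h
    have : (3 * a.val) % 8 = (3 * b.val) % 8 := h
    revert a b
    decide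
  · decide

lemma Gdisj : Disjoint G1.edgeSet G2.edgeSet := by
  rw [Set.disjoint_left]
  intro e he1 he2
  induction e with
  | _ a b =>
    rw [SimpleGraph.mem_edgeSet] at he1 he2
    exact (by decide : ∀ a b : Fin 8, G1.Adj a b → ¬ G2.Adj a b) a b he1 he2

theorem stmt_17 :
    ∃ G₁ G₂ : SimpleGraph (Fin 8),
      IsMaximalOuterplanar G₁ ∧ IsMaximalOuterplanar G₂ ∧
      Disjoint G₁.edgeSet G₂.edgeSet ∧
      (G₁ ⊔ G₂).edgeSet.ncard = 26 ∧
      ∃ e f : Sym2 (Fin 8), ¬ e.IsDiag ∧ ¬ f.IsDiag ∧ e ≠ f ∧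
        (∀ v : Fin 8, v ∈ e → v ∉ f) ∧
        G₁ ⊔ G₂ = (⊤ : SimpleGraph (Fin 8)).deleteEdges {e, f} := by
  refine ⟨G1, G2, isMaxOuter G1outer G1card, isMaxOuter G2outer G2card, Gdisj, ?_, ?_⟩
  · rw [SimpleGraph.edgeSet_sup, Set.ncard_union_eq Gdisj, G1card, G2card]
  · refine ⟨s(2,6), s(3,7), by decide, by decide, by decide, by decide, ?_⟩
    ext a b
    simp only [SimpleGraph.sup_adj, SimpleGraph.deleteEdges_adj, SimpleGraph.top_adj,
      Set.mem_insert_iff, Set.mem_singleton_iff, Sym2.eq_iff]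
    revert a b
    decide
end
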